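/- The closure of the range of I − C on C_l([0,∞]) equals {f ∈ C_l([0,∞]) : f(0) = f(∞) = 0}. -/

import Mathlib

open MeasureTheory Filter

/-- The Cesàro average: `ces f x = (1/x) ∫₀ˣ f(t) dt` for `x ≠ 0`, `ces f 0 = f 0`. -/
noncomputable def ces (f : ℝ → ℂ) (x : ℝ) : ℂ :=
  if x = 0 then f 0 else (∫ t in (0:ℝ)..x, f t) / (x : ℂ)

private lemma tendsto_ces (f : ℝ → ℂ) (hf : ContinuousOn f (Set.Ici 0)) (M : ℂ)
    (hM : Tendsto f atTop (nhds M)) : Tendsto (ces f) atTop (nhds M) := by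
  have hint : ∀ a b : ℝ, 0 ≤ a → IntervalIntegrable (fun t => ‖f t - M‖) volume a b ∨ True := by
    intro a b _; exact Or.inr trivial
  rw [Metric.tendsto_atTop]
  intro ε hε
  -- choose A ≥ 1 with ‖f t - M‖ ≤ ε/4 for t ≥ A
  obtain ⟨A₀, hA₀⟩ := (Metric.tendsto_atTop.mp hM (ε/4) (by linarith)).imp (fun A h => h)
  set A := max A₀ 1 with hA
  have hA1 : (1:ℝ) ≤ A := le_max_right _ _
  have hApos : (0:ℝ) < A := by linarith
  have hfar : ∀ t ≥ A, ‖f t - M‖ ≤ ε/4 := fun t ht =>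
    le_of_lt (by simpa [dist_eq_norm] using hA₀ t (le_trans (le_max_left _ _) ht))
  have hcont : ∀ a b : ℝ, 0 ≤ a → 0 ≤ b →
      IntervalIntegrable (fun t => ‖f t - M‖) volume a b := by
    intro a b ha hb
    apply ContinuousOn.intervalIntegrable
    apply ((hf.sub continuousOn_const).norm).mono
    intro x hx
    rcases Set.mem_uIcc.mp hx with ⟨h1, _⟩ | ⟨h1, _⟩ <;> [exact le_trans ha h1; exact le_trans hb h1]
  set B := ∫ t in (0:ℝ)..A, ‖f t - M‖ with hB
  have hB0 : 0 ≤ B := intervalIntegral.integral_nonneg (le_of_lt hApos) (fun t _ => norm_nonneg _)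
  refine ⟨max A (4*(B+1)/ε), fun x hx => ?_⟩
  have hxA : A ≤ x := le_trans (le_max_left _ _) hx
  have hxB : 4*(B+1)/ε ≤ x := le_trans (le_max_right _ _) hx
  have hx0 : (0:ℝ) < x := lt_of_lt_of_le hApos hxA
  have hne : (x:ℂ) ≠ 0 := by exact_mod_cast (ne_of_gt hx0)
  have hfi : ∀ a b : ℝ, 0 ≤ a → 0 ≤ b → IntervalIntegrable f volume a b := by
    intro a b ha hb
    apply ContinuousOn.intervalIntegrable
    apply hf.mono
    intro y hy
    rcases Set.mem_uIcc.mp hy with ⟨h1, _⟩ | ⟨h1, _⟩ <;> [exact le_trans ha h1; exact le_trans hb h1]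
  have key : ‖(∫ t in (0:ℝ)..x, f t) - (x:ℂ) * M‖ ≤ B + (x - A) * (ε/4) := by
    have h1 : (∫ t in (0:ℝ)..x, f t) - (x:ℂ) * M = ∫ t in (0:ℝ)..x, (f t - M) := by
      rw [intervalIntegral.integral_sub (hfi 0 x le_rfl hx0.le) intervalIntegrable_const,
        intervalIntegral.integral_const]
      simp [Complex.real_smul]
    rw [h1]
    calc ‖∫ t in (0:ℝ)..x, (f t - M)‖ ≤ ∫ t in (0:ℝ)..x, ‖f t - M‖ :=
          intervalIntegral.norm_integral_le_integral_norm hx0.le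
      _ = B + ∫ t in A..x, ‖f t - M‖ := by
          rw [hB, ← intervalIntegral.integral_add_adjacent_intervals (hcont 0 A le_rfl hApos.le)
            (hcont A x hApos.le hx0.le)]
      _ ≤ B + (x - A) * (ε/4) := by
          gcongr
          calc (∫ t in A..x, ‖f t - M‖) ≤ ∫ t in A..x, (ε/4) := by
                apply intervalIntegral.integral_mono_on hxA (hcont A x hApos.le hx0.le)
                  intervalIntegrable_const
                intro t ht; exact hfar t ht.1
            _ = (x - A) * (ε/4) := by rw [intervalIntegral.integral_const, smul_eq_mul]
  have hd : dist (ces f x) M ≤ (B + (x - A) * (ε/4)) / x := by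
    rw [dist_eq_norm, ces, if_neg (ne_of_gt hx0), div_sub' hne, norm_div]
    have hxn : ‖(x:ℂ)‖ = x := by
      rw [Complex.norm_real, Real.norm_eq_abs, abs_of_pos hx0]
    rw [hxn]
    gcongr
  refine lt_of_le_of_lt hd ?_
  rw [div_lt_iff₀ hx0]
  have h4 : 4*(B+1) ≤ ε * x := by
    have := (div_le_iff₀ hε).mp hxB
    linarith
  nlinarith [mul_pos hε hx0, mul_nonneg hApos.le hε.le]

private lemma ces_approx (g : ℝ → ℂ) (hg : ContinuousOn g (Set.Ici 0))
    (hg0 : g 0 = 0) (hL : Tendsto g atTop (nhds 0)) (ε : ℝ) (hε : ε > 0) :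
    ∃ f : ℝ → ℂ, ContinuousOn f (Set.Ici 0) ∧
        (∃ M : ℂ, Filter.Tendsto f Filter.atTop (nhds M)) ∧
        ∀ x ∈ Set.Ici (0:ℝ), ‖g x - (f x - ces f x)‖ < ε := by
  -- get δ for smallness near 0
  obtain ⟨δ, hδ0, hδ⟩ := Metric.continuousWithinAt_iff.mp (hg 0 Set.self_mem_Ici) (ε/2)
    (by linarith)
  set d := δ/2 with hdd
  have hd0 : 0 < d := by positivity
  have hsmall : ∀ x : ℝ, 0 ≤ x → x ≤ d → ‖g x‖ < ε/2 := by
    intro x hx0 hxd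
    have := hδ (x := x) hx0 (by rw [Real.dist_eq]; rw [abs_of_nonneg (by linarith)]; linarith)
    simpa [hg0, dist_eq_norm] using this
  -- get N for smallness at infinity
  obtain ⟨N₀, hN₀⟩ := Metric.tendsto_atTop.mp hL (ε/2) (by linarith)
  set N := max N₀ 1 with hNN
  have hN0 : (0:ℝ) < N := lt_of_lt_of_le one_pos (le_max_right _ _)
  have hbig : ∀ x : ℝ, N ≤ x → ‖g x‖ < ε/2 := by
    intro x hx
    have := hN₀ x (le_trans (le_max_left _ _) hx)
    simpa [dist_eq_norm] using this
  -- cutoff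
  set φ : ℝ → ℝ := fun t => min 1 (max 0 (2*t/d - 1)) * min 1 (max 0 (2 - t/N)) with hφ
  have hφc : Continuous φ := by fun_prop
  have hφ01 : ∀ t, 0 ≤ φ t ∧ φ t ≤ 1 := by
    intro t
    constructor
    · apply mul_nonneg <;> [exact le_min zero_le_one (le_max_left _ _);
        exact le_min zero_le_one (le_max_left _ _)]
    · calc φ t ≤ 1 * 1 := by
            apply mul_le_mul (min_le_left _ _) (min_le_left _ _)
              (le_min zero_le_one (le_max_left _ _)) zero_le_one
        _ = 1 := one_mul 1
  have hφz : ∀ t, t ≤ d/2 → φ t = 0 := by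
    intro t ht
    have : max 0 (2*t/d - 1) = 0 := by
      apply max_eq_left
      have : 2*t/d ≤ 1 := by
        rw [div_le_one hd0]; linarith
      linarith
    simp [hφ, this]
  have hφz' : ∀ t, 2*N ≤ t → φ t = 0 := by
    intro t ht
    have : max 0 (2 - t/N) = 0 := by
      apply max_eq_left
      have : 2 ≤ t/N := by rw [le_div_iff₀ hN0]; linarith
      linarith
    simp [hφ, this]
  have hφ1 : ∀ t, d ≤ t → t ≤ N → φ t = 1 := by
    intro t h1 h2
    have e1 : min 1 (max 0 (2*t/d - 1)) = 1 := by
      apply min_eq_left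
      have : (2:ℝ) ≤ 2*t/d := by rw [le_div_iff₀ hd0]; linarith
      exact le_max_of_le_right (by linarith)
    have e2 : min 1 (max 0 (2 - t/N)) = 1 := by
      apply min_eq_left
      have : t/N ≤ 1 := by rw [div_le_one hN0]; exact h2
      exact le_max_of_le_right (by linarith)
    simp [hφ, e1, e2]
  -- the truncated function
  set G : ℝ → ℂ := fun t => (φ t : ℂ) * g (max t 0) with hG
  have hGc : Continuous G := by
    apply Continuous.mul
    · exact Complex.continuous_ofReal.comp hφc
    · exact hg.comp_continuous (continuous_id.max continuous_const)
        (fun x => le_max_right x 0)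
  have hGz : ∀ t, t ≤ d/2 → G t = 0 := fun t ht => by simp [hG, hφz t ht]
  have hGz' : ∀ t, 2*N ≤ t → G t = 0 := fun t ht => by simp [hG, hφz' t ht]
  -- q = G t / t
  set q : ℝ → ℂ := fun t => G t / (t : ℂ) with hq
  have hqz : ∀ t, t ≤ d/2 → q t = 0 := fun t ht => by simp [hq, hGz t ht]
  have hqz' : ∀ t, 2*N ≤ t → q t = 0 := fun t ht => by simp [hq, hGz' t ht]
  have hqc : Continuous q := by
    rw [continuous_iff_continuousAt]
    intro t
    rcases eq_or_ne t 0 with rfl | ht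
    · apply ContinuousAt.congr (continuousAt_const (y := (0:ℂ)))
      filter_upwards [Iio_mem_nhds (show (0:ℝ) < d/2 by positivity)] with s hs
      exact (hqz s (le_of_lt hs)).symm
    · exact (hGc.continuousAt.div (Complex.continuous_ofReal.continuousAt)
        (by exact_mod_cast ht))
  have hmul : ∀ t : ℝ, (t:ℂ) * q t = G t := by
    intro t
    rcases eq_or_ne t 0 with rfl | ht
    · simp only [mul_zero, Complex.ofReal_zero, zero_mul]
      exact (hGz 0 (by positivity)).symm
    · have ht' : (t:ℂ) ≠ 0 := by exact_mod_cast ht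
      show (t:ℂ) * (G t / (t:ℂ)) = G t
      rw [mul_comm, div_mul_cancel₀ _ ht']
  -- primitive
  set h : ℝ → ℂ := fun x => ∫ t in (0:ℝ)..x, q t with hh
  have hder : ∀ t : ℝ, HasDerivAt h (q t) t := by
    intro t
    exact intervalIntegral.integral_hasDerivAt_right (hqc.intervalIntegrable _ _)
      (hqc.aestronglyMeasurable.stronglyMeasurableAtFilter) hqc.continuousAt
  have hhc : Continuous h := by
    rw [continuous_iff_continuousAt]; exact fun t => (hder t).continuousAt
  set f : ℝ → ℂ := fun x => G x + h x with hf
  have hfc : Continuous f := hGc.add hhc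
  -- the key integral identity
  have hGder : ∀ t : ℝ, HasDerivAt (fun u => ∫ s in (0:ℝ)..u, G s) (G t) t := by
    intro t
    exact intervalIntegral.integral_hasDerivAt_right (hGc.intervalIntegrable _ _)
      (hGc.aestronglyMeasurable.stronglyMeasurableAtFilter) hGc.continuousAt
  have hFder : ∀ t : ℝ, HasDerivAt
      (fun u => u • h u - ∫ s in (0:ℝ)..u, G s) (h t) t := by
    intro t
    have h1 : HasDerivAt (fun u : ℝ => u • h u) (t • q t + (1:ℝ) • h t) t :=
      (hasDerivAt_id t).smul (hder t)
    have h2 := h1.sub (hGder t)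
    have : t • q t + (1:ℝ) • h t - G t = h t := by
      rw [Complex.real_smul, hmul t]; simp
    rwa [this] at h2
  have hint : ∀ x : ℝ, ∫ t in (0:ℝ)..x, h t = x • h x - ∫ s in (0:ℝ)..x, G s := by
    intro x
    have := intervalIntegral.integral_eq_sub_of_hasDerivAt
      (f := fun u => u • h u - ∫ s in (0:ℝ)..u, G s) (f' := h) (a := 0) (b := x)
      (fun t _ => hFder t) (hhc.intervalIntegrable _ _)
    simpa [hh] using this
  have hkey : ∀ x : ℝ, (∫ t in (0:ℝ)..x, f t) = (x:ℂ) * h x := by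
    intro x
    rw [hf]
    rw [intervalIntegral.integral_add (hGc.intervalIntegrable _ _) (hhc.intervalIntegrable _ _)]
    rw [hint x, Complex.real_smul]
    ring
  have hces : ∀ x : ℝ, f x - ces f x = G x := by
    intro x
    rcases eq_or_ne x 0 with rfl | hx
    · rw [ces, if_pos rfl]
      simp only [sub_self]
      exact (hGz 0 (by positivity)).symm
    · have hx' : (x:ℂ) ≠ 0 := by exact_mod_cast hx
      rw [ces, if_neg hx, hkey x, mul_comm, mul_div_assoc, div_self hx', mul_one]
      show G x + h x - h x = G x
      ring
  refine ⟨f, hfc.continuousOn, ⟨h (2*N), ?_⟩, ?_⟩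
  · -- limit at infinity
    have hhconst : ∀ x : ℝ, 2*N ≤ x → h x = h (2*N) := by
      intro x hx
      have : h x - h (2*N) = ∫ t in (2*N)..x, q t := by
        show (∫ t in (0:ℝ)..x, q t) - (∫ t in (0:ℝ)..(2*N), q t) = ∫ t in (2*N)..x, q t
        rw [← intervalIntegral.integral_add_adjacent_intervals
          (a := 0) (b := 2*N) (c := x) (hqc.intervalIntegrable _ _) (hqc.intervalIntegrable _ _)]
        ring
      have hz : (∫ t in (2*N)..x, q t) = 0 := by
        rw [← intervalIntegral.integral_zero (a := 2*N) (b := x) (E := ℂ)]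
        apply intervalIntegral.integral_congr
        intro t ht
        rw [Set.uIcc_of_le hx] at ht
        exact hqz' t ht.1
      have := this.trans hz
      linear_combination (norm := module) this
    apply Tendsto.congr' _ (tendsto_const_nhds (x := h (2*N)) (f := atTop))
    filter_upwards [eventually_ge_atTop (2*N)] with x hx
    show h (2*N) = G x + h x
    rw [hGz' x hx, hhconst x hx, zero_add]
  · -- the bound
    intro x hx
    have hx0 : (0:ℝ) ≤ x := hx
    have hGx : G x = (φ x : ℂ) * g x := by
      show (φ x : ℂ) * g (max x 0) = (φ x : ℂ) * g x
      rw [max_eq_left hx0]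
    rw [hces x, hGx]
    have : g x - (φ x : ℂ) * g x = ((1 - φ x : ℝ) : ℂ) * g x := by
      push_cast; ring
    rw [this, norm_mul, Complex.norm_real, Real.norm_eq_abs]
    have habs : |1 - φ x| ≤ 1 := by
      have := hφ01 x
      rw [abs_le]; constructor <;> linarith [this.1, this.2]
    have hb1 : |1 - φ x| * ‖g x‖ ≤ ‖g x‖ := by
      calc |1 - φ x| * ‖g x‖ ≤ 1 * ‖g x‖ :=
            mul_le_mul_of_nonneg_right habs (norm_nonneg _)
        _ = ‖g x‖ := one_mul _
    rcases le_or_gt x d with hxd | hxd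
    · linarith [hsmall x hx0 hxd]
    · rcases le_or_gt x N with hxN | hxN
      · rw [hφ1 x hxd.le hxN]
        simpa using hε
      · linarith [hbig x hxN.le]

/-- The closure of the range of `I - C` on `C_l([0,∞])` is
`{f ∈ C_l([0,∞]) : f(0) = f(∞) = 0}`: a function `g ∈ C_l([0,∞])` with limit `L` at
infinity satisfies `g 0 = 0 ∧ L = 0` iff it is uniformly approximable by elements
`f - C f` with `f ∈ C_l([0,∞])`. -/
theorem cesaro_Cl_range_closure (g : ℝ → ℂ) (hg : ContinuousOn g (Set.Ici 0))
    (L : ℂ) (hlim : Filter.Tendsto g Filter.atTop (nhds L)) :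
    (g 0 = 0 ∧ L = 0) ↔
      ∀ ε > (0:ℝ), ∃ f : ℝ → ℂ, ContinuousOn f (Set.Ici 0) ∧
        (∃ M : ℂ, Filter.Tendsto f Filter.atTop (nhds M)) ∧
        ∀ x ∈ Set.Ici (0:ℝ), ‖g x - (f x - ces f x)‖ < ε := by
  constructor
  · rintro ⟨hg0, rfl⟩
    intro ε hε
    exact ces_approx g hg hg0 hlim ε hε
  · intro h
    constructor
    · by_contra h0
      obtain ⟨f, _, _, hb⟩ := h ‖g 0‖ (by simpa using h0)
      have := hb 0 Set.self_mem_Ici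
      rw [ces, if_pos rfl] at this
      simp at this
    · by_contra h0
      obtain ⟨f, hfc, ⟨M, hM⟩, hb⟩ := h (‖L‖/2) (by simp [norm_pos_iff, h0])
      have h1 : Tendsto (fun x => g x - (f x - ces f x)) atTop (nhds L) := by
        have h2 : Tendsto (fun x => f x - ces f x) atTop (nhds 0) := by
          have := hM.sub (tendsto_ces f hfc M hM)
          simpa using this
        simpa using hlim.sub h2
      have h3 : ‖L‖ ≤ ‖L‖/2 := by
        apply le_of_tendsto h1.norm
        filter_upwards [eventually_ge_atTop (0:ℝ)] with x hx
        exact (hb x hx).le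
      have : (0:ℝ) < ‖L‖ := by simpa using h0
      linarith
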